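/- arXiv:1508.07267 — 4 statements merged into one kernel-verified Lean document; each statement's English description precedes it below -/
import Mathlib

section
/- For indicator functions f = 1_A and g = 1_B of measurable sets A, B in a product probability space (S, 𝕊, P) with P a product measure, the pointwise inequality 1_{A □ B}(x) ≤ max over disjoint K, L ⊆ {1,...,n} of f̲_K(x) · g̲_L(x) holds, where f̲_K(x) = ess inf_{y ∈ [x]_K} f(y) with respect to the product measure on coordinates in K^c, and similarly for g̲_L. -/
open MeasureTheory ENNReal

/-- The essential infimum of `f` over the set of points agreeing with `x` on the
coordinates in `K`, with respect to the product measure on the coordinates outside `K`. -/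
noncomputable def essInfK {n : ℕ} {S : Fin n → Type*} [∀ i, MeasurableSpace (S i)]
    (P : ∀ i, Measure (S i)) (f : (∀ i, S i) → ℝ≥0∞) (K : Finset (Fin n))
    (x : ∀ i, S i) : ℝ≥0∞ :=
  essInf (fun z : ∀ i : {i : Fin n // i ∉ K}, S i =>
      f (fun i => if h : i ∈ K then x i else z ⟨i, h⟩))
    (Measure.pi fun i : {i : Fin n // i ∉ K} => P i)

/-- `cylinder x K` is the set of points agreeing with `x` on the coordinates in `K`. -/
def cylinder {n : ℕ} {S : Fin n → Type*} (x : ∀ i, S i) (K : Finset (Fin n)) :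
    Set (∀ i, S i) :=
  {y | ∀ i ∈ K, y i = x i}

/-- The van den Berg–Kesten box operation. -/
def boxOp {n : ℕ} {S : Fin n → Type*} (A B : Set (∀ i, S i)) : Set (∀ i, S i) :=
  {x | ∃ K L : Finset (Fin n), Disjoint K L ∧ cylinder x K ⊆ A ∧ cylinder x L ⊆ B}


theorem essInfK_eq_one {n : ℕ} {S : Fin n → Type*} [∀ i, MeasurableSpace (S i)]
    (P : ∀ i, Measure (S i)) [∀ i, IsProbabilityMeasure (P i)]
    (A : Set (∀ i, S i)) (K : Finset (Fin n)) (x : ∀ i, S i)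
    (h : cylinder x K ⊆ A) : essInfK P (A.indicator 1) K x = 1 := by
  unfold essInfK
  have : (fun z : ∀ i : {i : Fin n // i ∉ K}, S i =>
      A.indicator (1 : (∀ i, S i) → ℝ≥0∞)
        (fun i => if h : i ∈ K then x i else z ⟨i, h⟩)) = fun _ => 1 := by
    funext z
    have hmem : (fun i => if h : i ∈ K then x i else z ⟨i, h⟩) ∈ A := by
      apply h
      intro i hi
      simp [hi]
    simp [Set.indicator_of_mem hmem]
  rw [this]
  exact essInf_const _ (NeZero.ne _)

/-- For indicators `f = 1_A`, `g = 1_B` of measurable sets, pointwise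
`1_{A □ B}(x) ≤ max` over disjoint `K, L` of `f̲_K(x) ⬝ g̲_L(x)`. -/
theorem indicator_boxOp_le {n : ℕ} {S : Fin n → Type*} [∀ i, MeasurableSpace (S i)]
    (P : ∀ i, Measure (S i)) [∀ i, IsProbabilityMeasure (P i)]
    (A B : Set (∀ i, S i)) (hA : MeasurableSet A) (hB : MeasurableSet B)
    (x : ∀ i, S i) :
    (boxOp A B).indicator (1 : (∀ i, S i) → ℝ≥0∞) x ≤
      ⨆ (K : Finset (Fin n)) (L : Finset (Fin n)) (_ : Disjoint K L),
        essInfK P (A.indicator 1) K x * essInfK P (B.indicator 1) L x := by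
  by_cases hx : x ∈ boxOp A B
  · rw [Set.indicator_of_mem hx]
    obtain ⟨K, L, hKL, hK, hL⟩ := hx
    refine le_trans ?_ (le_iSup_of_le K (le_iSup_of_le L (le_iSup_of_le hKL le_rfl)))
    rw [essInfK_eq_one P A K x hK, essInfK_eq_one P B L x hL, one_mul]
    rfl
  · rw [Set.indicator_of_notMem hx]
    exact zero_le
end

section
/- Functional BKR inequality (b) implies (a): if for all nonnegative measurable f, g one has E[max over disjoint K, L ⊆ {1,...,n} of f̲_K(X)g̲_L(X)] ≤ E[f(X)]E[g(X)], then for any countable collections {f_α}, {g_β} of nonnegative functions depending on K_α, L_β respectively, E[sup over disjoint α, β of f_α(X)g_β(X)] ≤ E[sup_α f_α(X)] · E[sup_β g_β(X)]. -/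
open MeasureTheory ENNReal

/-- `f` depends (only) on the coordinates in `K`. -/
def DepOn {n : ℕ} {S : Fin n → Type*} (f : (∀ i, S i) → ℝ≥0∞) (K : Finset (Fin n)) :
    Prop :=
  ∀ x y : ∀ i, S i, (∀ i ∈ K, x i = y i) → f x = f y

/-- If `h` depends only on `K` and `h ≤ F`, then `h x ≤ essInfK P F K x`. -/
lemma le_essInfK_of_depOn {n : ℕ} {S : Fin n → Type*} [∀ i, MeasurableSpace (S i)]
    (P : ∀ i, Measure (S i)) {h F : (∀ i, S i) → ℝ≥0∞} {K : Finset (Fin n)}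
    (hd : DepOn h K) (hle : ∀ y, h y ≤ F y) (x : ∀ i, S i) :
    h x ≤ essInfK P F K x := by
  refine le_essInf_of_ae_le _ (Filter.Eventually.of_forall fun z => ?_)
  have : h x = h (fun i => if h' : i ∈ K then x i else z ⟨i, h'⟩) := by
    apply hd
    intro i hi
    simp [hi]
  rw [this]
  exact hle _

/-- Functional BKR inequality (b) implies version (a): if for all nonnegative measurable
`f, g` the essential-infimum inequality holds with maxima over all pairs of disjoint
subsets of `{1,…,n}`, then for countable collections `{f_α}, {g_β}` of nonnegative
measurable functions depending on `K_α, L_β` respectively, inequality (a) holds. -/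
theorem bkr_b_implies_a {n : ℕ} {S : Fin n → Type*} [∀ i, MeasurableSpace (S i)]
    (P : ∀ i, Measure (S i)) [∀ i, IsProbabilityMeasure (P i)]
    (hb : ∀ f g : (∀ i, S i) → ℝ≥0∞, Measurable f → Measurable g →
      ∫⁻ x, ⨆ (K : Finset (Fin n)) (L : Finset (Fin n)) (_ : Disjoint K L),
          essInfK P f K x * essInfK P g L x ∂(Measure.pi P) ≤
        (∫⁻ x, f x ∂(Measure.pi P)) * ∫⁻ x, g x ∂(Measure.pi P))
    (ι κ : Type) [Countable ι] [Countable κ]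
    (f : ι → (∀ i, S i) → ℝ≥0∞) (g : κ → (∀ i, S i) → ℝ≥0∞)
    (K : ι → Finset (Fin n)) (L : κ → Finset (Fin n))
    (hfm : ∀ a, Measurable (f a)) (hgm : ∀ b, Measurable (g b))
    (hfd : ∀ a, DepOn (f a) (K a)) (hgd : ∀ b, DepOn (g b) (L b)) :
    ∫⁻ x, ⨆ (a : ι) (b : κ) (_ : Disjoint (K a) (L b)), f a x * g b x
        ∂(Measure.pi P) ≤
      (∫⁻ x, ⨆ a, f a x ∂(Measure.pi P)) * ∫⁻ x, ⨆ b, g b x ∂(Measure.pi P) := by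
  have hFm : Measurable (fun x => ⨆ a, f a x) := Measurable.iSup fun a => hfm a
  have hGm : Measurable (fun x => ⨆ b, g b x) := Measurable.iSup fun b => hgm b
  refine le_trans (lintegral_mono fun x => ?_) (hb _ _ hFm hGm)
  refine iSup_le fun a => iSup_le fun b => iSup_le fun hd => ?_
  refine le_trans ?_
    (le_iSup_of_le (K a) (le_iSup_of_le (L b) (le_iSup_of_le hd le_rfl)))
  exact mul_le_mul'
    (le_essInfK_of_depOn P (hfd a) (fun y => le_iSup (fun a => f a y) a) x)
    (le_essInfK_of_depOn P (hgd b) (fun y => le_iSup (fun b => g b y) b) x)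
end

section
/- Let {f_α}_{α=1}^m be functions ℝⁿ → ℝ, all coordinatewise increasing. Let X = (X_1,...,X_n) have independent coordinates, Y an independent copy of X, and for H_α ⊆ {1,...,n} define Z_α with (Z_α)_i = Y_i if i ∈ H_α and X_i otherwise. Set U = (f_1(Z_1),...,f_m(Z_m)) and V = (f_1(X),...,f_m(X)). Then for every c ∈ ℝᵐ, P(U ≥ c) ≤ P(V ≥ c) and P(U ≤ c) ≤ P(V ≤ c), where inequalities between vectors are coordinatewise. -/
open MeasureTheory ProbabilityTheory
open scoped ENNReal

section Prelim

/-- Outer measure bound through a pushforward. -/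
lemma outer_le_of_map {α β : Type*} [MeasurableSpace α] [MeasurableSpace β]
    {g : α → β} (hg : Measurable g) {Q : Measure α} {ρ : Measure β}
    (h : Measure.map g Q = ρ) (A : Set β) : Q (g ⁻¹' A) ≤ ρ A := by
  obtain ⟨M, hAM, hMmeas, hMeq⟩ := MeasureTheory.exists_measurable_superset ρ A
  calc Q (g ⁻¹' A) ≤ Q (g ⁻¹' M) := measure_mono (Set.preimage_mono hAM)
    _ = ρ M := by rw [← h, Measure.map_apply hg hMmeas]
    _ = ρ A := hMeq

lemma ennreal_rearrange {a b c d : ℝ≥0∞} (hab : a ≤ b) (hcd : c ≤ d) :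
    a * d + b * c ≤ a * c + b * d := by
  obtain ⟨u, rfl⟩ := exists_add_of_le hab
  obtain ⟨v, rfl⟩ := exists_add_of_le hcd
  have : a * (c + v) + (a + u) * c = (a * c + a * c) + (a * v + u * c) := by ring
  rw [this]
  have : a * c + (a + u) * (c + v) = ((a * c + a * c) + (a * v + u * c)) + u * v := by ring
  rw [this]
  exact le_self_add

/-- Chebyshev / FKG association inequality for two comonotone `ℝ≥0∞`-valued functions. -/
lemma chebyshev_assoc {μ : Measure ℝ} [IsProbabilityMeasure μ]
    {Φ Ψ : ℝ → ℝ≥0∞} (hΦ : Measurable Φ) (hΨ : Measurable Ψ)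
    (hco : ∀ x y : ℝ, Φ x * Ψ y + Φ y * Ψ x ≤ Φ x * Ψ x + Φ y * Ψ y) :
    (∫⁻ x, Φ x ∂μ) * (∫⁻ x, Ψ x ∂μ) ≤ ∫⁻ x, Φ x * Ψ x ∂μ := by
  have h2 : (2 : ℝ≥0∞) ≠ 0 := by norm_num
  have h2' : (2 : ℝ≥0∞) ≠ ⊤ := by norm_num
  rw [← ENNReal.mul_le_mul_iff_right h2 h2']
  have lhs_eq : ∫⁻ x, ∫⁻ y, (Φ x * Ψ y + Φ y * Ψ x) ∂μ ∂μ
      = 2 * ((∫⁻ x, Φ x ∂μ) * ∫⁻ x, Ψ x ∂μ) := by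
    have : ∀ x : ℝ, ∫⁻ y, (Φ x * Ψ y + Φ y * Ψ x) ∂μ
        = Φ x * (∫⁻ y, Ψ y ∂μ) + (∫⁻ y, Φ y ∂μ) * Ψ x := by
      intro x
      rw [lintegral_add_left (hΨ.const_mul _)]
      rw [lintegral_const_mul _ hΨ, lintegral_mul_const _ hΦ]
    simp_rw [this]
    rw [lintegral_add_left (hΦ.mul_const _)]
    rw [lintegral_mul_const _ hΦ, lintegral_const_mul _ hΨ]
    ring
  have rhs_eq : ∫⁻ x, ∫⁻ y, (Φ x * Ψ x + Φ y * Ψ y) ∂μ ∂μ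
      = 2 * ∫⁻ x, Φ x * Ψ x ∂μ := by
    have : ∀ x : ℝ, ∫⁻ y, (Φ x * Ψ x + Φ y * Ψ y) ∂μ
        = Φ x * Ψ x + ∫⁻ y, Φ y * Ψ y ∂μ := by
      intro x
      rw [lintegral_add_left measurable_const, lintegral_const, measure_univ, mul_one]
    simp_rw [this]
    rw [lintegral_add_left (f := fun x => Φ x * Ψ x) (hΦ.mul hΨ), lintegral_const, measure_univ, mul_one]
    ring
  calc 2 * ((∫⁻ x, Φ x ∂μ) * ∫⁻ x, Ψ x ∂μ)
      = ∫⁻ x, ∫⁻ y, (Φ x * Ψ y + Φ y * Ψ x) ∂μ ∂μ := lhs_eq.symm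
    _ ≤ ∫⁻ x, ∫⁻ y, (Φ x * Ψ x + Φ y * Ψ y) ∂μ ∂μ :=
        lintegral_mono fun x => lintegral_mono fun y => hco x y
    _ = 2 * ∫⁻ x, Φ x * Ψ x ∂μ := rhs_eq

/-- Marginalization of a product probability measure along an injective reindexing. -/
lemma map_comp_pi {κ : Type*} [Fintype κ] {k : ℕ}
    (mμ : κ → Measure ℝ) [∀ s, IsProbabilityMeasure (mμ s)]
    (r : Fin k → κ) (hr : Function.Injective r) :
    Measure.map (fun z : κ → ℝ => z ∘ r) (Measure.pi mμ)
      = Measure.pi (fun i => mμ (r i)) := by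
  classical
  symm
  apply Measure.pi_eq
  intro s hs
  have hmeas : Measurable (fun z : κ → ℝ => z ∘ r) :=
    measurable_pi_lambda _ fun i => measurable_pi_apply _
  rw [Measure.map_apply hmeas (MeasurableSet.univ_pi hs)]
  set B : κ → Set ℝ := fun c => if h : ∃ i, r i = c then s h.choose else Set.univ with hB
  have key : ∀ i, B (r i) = s i := by
    intro i
    have h' : ∃ i', r i' = r i := ⟨i, rfl⟩
    simp only [hB, dif_pos h']
    rw [hr h'.choose_spec]
  have hpre : (fun z : κ → ℝ => z ∘ r) ⁻¹' (Set.pi Set.univ s) = Set.pi Set.univ B := by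
    ext z
    simp only [Set.mem_preimage, Set.mem_univ_pi, Function.comp_apply]
    constructor
    · intro hz c
      by_cases h : ∃ i, r i = c
      · obtain ⟨i, rfl⟩ := h
        rw [key i]; exact hz i
      · simp [hB, h]
    · intro hz i
      have h2 := hz (r i)
      rwa [key i] at h2
  rw [hpre, Measure.pi_pi]
  calc ∏ c : κ, mμ c (B c)
      = ∏ c ∈ Finset.univ.image r, mμ c (B c) := by
        symm
        apply Finset.prod_subset (Finset.subset_univ _)
        intro c _ hc
        have h : ¬ ∃ i, r i = c := by
          rintro ⟨i, hi⟩
          exact hc (Finset.mem_image.2 ⟨i, Finset.mem_univ i, hi⟩)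
        simp [hB, h]
    _ = ∏ i : Fin k, mμ (r i) (B (r i)) := Finset.prod_image (fun i _ j _ h => hr h)
    _ = ∏ i : Fin k, mμ (r i) (s i) := by
        exact Finset.prod_congr rfl fun i _ => by rw [key i]

end Prelim

section Upper

/-- An upper (increasing) set. -/
def UpSet {k : ℕ} (S : Set (Fin k → ℝ)) : Prop :=
  ∀ ⦃x y : Fin k → ℝ⦄, x ≤ y → x ∈ S → y ∈ S

/-- The "inner approximation" of a set from below by points of a grid. -/
def upApp {k : ℕ} (D : Fin k → Set ℝ) (S : Set (Fin k → ℝ)) : Set (Fin k → ℝ) :=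
  {x | ∃ p : Fin k → ℝ, (∀ i, p i ∈ D i) ∧ p ∈ S ∧ p ≤ x}

lemma upApp_subset {k : ℕ} {D : Fin k → Set ℝ} {S : Set (Fin k → ℝ)} (hS : UpSet S) :
    upApp D S ⊆ S := fun _x ⟨_p, _, hpS, hpx⟩ => hS hpx hpS

lemma upApp_upSet {k : ℕ} {D : Fin k → Set ℝ} {S : Set (Fin k → ℝ)} :
    UpSet (upApp D S) := fun x y hxy ⟨p, h1, h2, h3⟩ => ⟨p, h1, h2, h3.trans hxy⟩

lemma measurableSet_ge {k : ℕ} (p : Fin k → ℝ) : MeasurableSet {x : Fin k → ℝ | p ≤ x} := by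
  have : {x : Fin k → ℝ | p ≤ x} = ⋂ i, (fun x : Fin k → ℝ => x i) ⁻¹' Set.Ici (p i) := by
    ext x; simp [Pi.le_def, Set.mem_iInter]
  rw [this]
  exact MeasurableSet.iInter fun i => (measurable_pi_apply i) measurableSet_Ici

lemma upApp_measurable {k : ℕ} {D : Fin k → Set ℝ} (hD : ∀ i, (D i).Countable)
    (S : Set (Fin k → ℝ)) : MeasurableSet (upApp D S) := by
  have hgrid : ({p : Fin k → ℝ | ∀ i, p i ∈ D i} ∩ S).Countable :=
    (Set.countable_pi hD).mono Set.inter_subset_left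
  have : upApp D S = ⋃ p ∈ ({p : Fin k → ℝ | ∀ i, p i ∈ D i} ∩ S), {x | p ≤ x} := by
    ext x
    simp only [upApp, Set.mem_setOf_eq, Set.mem_iUnion, Set.mem_inter_iff]
    constructor
    · rintro ⟨p, h1, h2, h3⟩; exact ⟨p, ⟨h1, h2⟩, h3⟩
    · rintro ⟨p, ⟨h1, h2⟩, h3⟩; exact ⟨p, h1, h2, h3⟩
  rw [this]
  exact MeasurableSet.biUnion hgrid fun p _ => measurableSet_ge p

lemma indicator_monotone_of_upSet {k : ℕ} {S : Set (Fin k → ℝ)} (hS : UpSet S) :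
    Monotone (S.indicator (fun _ => (1 : ℝ≥0∞))) := by
  intro x y hxy
  by_cases hx : x ∈ S
  · rw [Set.indicator_of_mem hx, Set.indicator_of_mem (hS hxy hx)]
  · rw [Set.indicator_of_notMem hx]; exact zero_le

/-- The set of atoms of a finite measure is countable. -/
lemma countable_atoms (ρ : Measure ℝ) [IsFiniteMeasure ρ] :
    {x : ℝ | ρ {x} ≠ 0}.Countable := by
  have := Measure.countable_meas_pos_of_disjoint_iUnion (μ := ρ)
    (As := fun x : ℝ => {x}) (fun x => measurableSet_singleton x)
    (fun x y hxy => by simp [Function.onFun, Set.disjoint_singleton, hxy])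
  convert this using 1
  ext x
  simp [pos_iff_ne_zero]

end Upper

section LemmaB

theorem upApp_null : ∀ (k : ℕ) (μ : Fin k → Measure ℝ),
    (∀ i, IsProbabilityMeasure (μ i)) →
    ∀ (D : Fin k → Set ℝ), (∀ i, (D i).Countable) → (∀ i, Dense (D i)) →
    (∀ i x, μ i {x} ≠ 0 → x ∈ D i) →
    ∀ (S : Set (Fin k → ℝ)), UpSet S →
    Measure.pi μ (S \ upApp D S) = 0 := by
  intro k
  induction k with
  | zero =>
    intro μ _ D _ _ _ S _
    have h : S \ upApp D S = ∅ :=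
      Set.diff_eq_empty.2 fun x hx => ⟨x, fun i => i.elim0, hx, le_refl x⟩
    simp [h]
  | succ n ih =>
    intro μ hprob D hDc hDd hDa S hS
    haveI := hprob
    haveI : ∀ i, SigmaFinite (μ i) := fun i => inferInstance
    classical
    set μt : Fin n → Measure ℝ := fun j => μ j.succ with hμt
    haveI : ∀ j, IsProbabilityMeasure (μt j) := fun j => hprob _
    haveI : ∀ j, SigmaFinite (μt j) := fun j => inferInstance
    set ν : Measure (Fin (n+1) → ℝ) := Measure.pi μ with hν
    set ν' : Measure (Fin n → ℝ) := Measure.pi μt with hν'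
    set Dt : Fin n → Set ℝ := fun j => D j.succ with hDt
    set W : ℝ → Set (Fin n → ℝ) := fun q => {x' | Fin.cons q x' ∈ S} with hW
    have hWup : ∀ q, UpSet (W q) := by
      intro q x y hxy hx
      refine hS (fun i => ?_) hx
      refine Fin.cases ?_ (fun j => ?_) i
      · simp
      · simpa using hxy j
    set Wt : ℝ → Set (Fin n → ℝ) := fun q => upApp Dt (W q) with hWt
    have hIH : ∀ q, ν' (W q \ Wt q) = 0 := fun q =>
      ih μt (fun j => hprob _) Dt (fun j => hDc _) (fun j => hDd _) (fun j x => hDa _ x)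
        (W q) (hWup q)
    set e := MeasurableEquiv.piFinSuccAbove (fun _ : Fin (n+1) => ℝ) 0 with he
    have heapp : ∀ x : Fin (n+1) → ℝ, e x = (x 0, Fin.tail x) := fun _ => rfl
    have hmp : Measure.map e ν = (μ 0).prod ν' := by
      have h1 := (measurePreserving_piFinSuccAbove μ 0).map_eq
      have h2 : (fun j => μ ((0 : Fin (n+1)).succAbove j)) = μt := by
        funext j; rw [Fin.succAbove_zero]
      rw [h2] at h1
      exact h1
    set C1 : Set (Fin (n+1) → ℝ) :=
      ⋃ q ∈ D 0, (fun x : Fin (n+1) → ℝ => Fin.tail x) ⁻¹' (W q \ Wt q) with hC1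
    set C3 : Set (ℝ × (Fin n → ℝ)) :=
      {p | p.1 ∉ D 0 ∧ (∀ q ∈ D 0, p.2 ∈ Wt q → p.1 ≤ q) ∧
        (∀ ε : ℚ, 0 < ε → ∃ q ∈ D 0, q < p.1 + (ε : ℝ) ∧ p.2 ∈ Wt q)} with hC3
    have hincl : S \ upApp D S ⊆ C1 ∪ e ⁻¹' C3 := by
      rintro x ⟨hxS, hxn⟩
      by_cases hc1 : ∃ q ∈ D 0, Fin.tail x ∈ W q \ Wt q
      · left
        obtain ⟨q, hq, hmem⟩ := hc1
        exact Set.mem_biUnion hq hmem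
      · right
        push_neg at hc1
        have hpt : ∀ q ∈ D 0, Fin.tail x ∈ W q → Fin.tail x ∈ Wt q := by
          intro q hq hw
          by_contra hnot
          exact (hc1 q hq) ⟨hw, hnot⟩
        have hkey : ∀ q ∈ D 0, Fin.tail x ∈ Wt q → ¬ q ≤ x 0 := by
          intro q hq hWtq hle
          obtain ⟨p, hpD, hpW, hpx⟩ := hWtq
          apply hxn
          refine ⟨Fin.cons q p, fun i => ?_, hpW, fun i => ?_⟩
          · refine Fin.cases ?_ (fun j => ?_) i
            · simpa using hq
            · simpa using hpD j
          · refine Fin.cases ?_ (fun j => ?_) i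
            · simpa using hle
            · simpa [Fin.tail] using hpx j
        have hx0 : Fin.cons (x 0) (Fin.tail x) = x := Fin.cons_self_tail x
        have hxW : Fin.tail x ∈ W (x 0) := by
          simp only [hW, Set.mem_setOf_eq, hx0]; exact hxS
        have hnD : x 0 ∉ D 0 := fun hmem =>
          hkey (x 0) hmem (hpt _ hmem hxW) (le_refl _)
        show e x ∈ C3
        rw [heapp]
        refine ⟨hnD, ?_, ?_⟩
        · intro q hq hWtq
          by_contra hlt
          push_neg at hlt
          exact hkey q hq hWtq (le_of_lt hlt)
        · intro ε hε
          have hlt : x 0 < x 0 + (ε : ℝ) := by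
            have : (0:ℝ) < (ε:ℝ) := by exact_mod_cast hε
            linarith
          obtain ⟨q, hq, hqIoo⟩ := (hDd 0).exists_between hlt
          refine ⟨q, hq, hqIoo.2, ?_⟩
          apply hpt q hq
          simp only [hW, Set.mem_setOf_eq]
          refine hS (y := Fin.cons q (Fin.tail x)) ?_ hxS
          intro i
          rw [← hx0]
          refine Fin.cases ?_ (fun j => ?_) i
          · simpa using le_of_lt hqIoo.1
          · simp
    have htailmeas : Measurable (fun x : Fin (n+1) → ℝ => Fin.tail x) :=
      measurable_pi_lambda _ fun j => measurable_pi_apply _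
    have hC1null : ν C1 = 0 := by
      have htail : Measure.map (fun x : Fin (n+1) → ℝ => Fin.tail x) ν = ν' :=
        map_comp_pi μ Fin.succ (Fin.succ_injective n)
      rw [hC1, measure_biUnion_null_iff (hDc 0)]
      intro q hq
      have := outer_le_of_map htailmeas htail (W q \ Wt q)
      rw [hIH q] at this
      exact le_antisymm this zero_le
    have hWtmeas : ∀ q, MeasurableSet (Wt q) := fun q =>
      upApp_measurable (fun j => hDc _) (W q)
    have hC3meas : MeasurableSet C3 := by
      have : C3 = (Prod.fst ⁻¹' (D 0)ᶜ)
          ∩ ((⋂ q ∈ D 0, ((Prod.snd ⁻¹' (Wt q))ᶜ ∪ Prod.fst ⁻¹' Set.Iic q))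
          ∩ (⋂ ε ∈ {ε : ℚ | 0 < ε}, ⋃ q ∈ D 0,
              (Prod.fst ⁻¹' Set.Ioi (q - (ε:ℝ)) ∩ Prod.snd ⁻¹' Wt q))) := by
        ext p
        simp only [hC3, Set.mem_setOf_eq, Set.mem_inter_iff, Set.mem_preimage,
          Set.mem_compl_iff, Set.mem_iInter, Set.mem_iUnion, Set.mem_union,
          Set.mem_Iic, Set.mem_Ioi]
        constructor
        · rintro ⟨h1, h2, h3⟩
          refine ⟨h1, fun q hq => ?_, fun ε hε => ?_⟩
          · by_cases hw : p.2 ∈ Wt q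
            · exact Or.inr (h2 q hq hw)
            · exact Or.inl hw
          · obtain ⟨q, hq, hq1, hq2⟩ := h3 ε hε
            exact ⟨q, hq, by linarith, hq2⟩
        · rintro ⟨h1, h2, h3⟩
          refine ⟨h1, fun q hq hw => ?_, fun ε hε => ?_⟩
          · rcases h2 q hq with h | h
            · exact absurd hw h
            · exact h
          · obtain ⟨q, hq, hq1, hq2⟩ := h3 ε hε
            exact ⟨q, hq, by linarith, hq2⟩
      rw [this]
      refine (measurable_fst ((hDc 0).measurableSet.compl)).inter (MeasurableSet.inter ?_ ?_)
      · exact MeasurableSet.biInter (hDc 0) fun q _ =>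
          ((measurable_snd (hWtmeas q)).compl).union (measurable_fst measurableSet_Iic)
      · exact MeasurableSet.biInter (Set.to_countable _) fun ε _ =>
          MeasurableSet.biUnion (hDc 0) fun q _ =>
            (measurable_fst measurableSet_Ioi).inter (measurable_snd (hWtmeas q))
    have hC3null : (μ 0).prod ν' C3 = 0 := by
      rw [Measure.prod_apply_symm hC3meas]
      have hsec : ∀ x' : Fin n → ℝ, μ 0 ((fun y : ℝ => (y, x')) ⁻¹' C3) = 0 := by
        intro x'
        rcases Set.eq_empty_or_nonempty ((fun y : ℝ => (y, x')) ⁻¹' C3) with h | ⟨y₀, hy₀⟩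
        · simp [h]
        · simp only [Set.mem_preimage, hC3, Set.mem_setOf_eq] at hy₀
          have hsub : ((fun y : ℝ => (y, x')) ⁻¹' C3) ⊆ {y₀} := by
            intro y hy
            simp only [Set.mem_preimage, hC3, Set.mem_setOf_eq] at hy
            simp only [Set.mem_singleton_iff]
            by_contra hne
            rcases lt_or_gt_of_ne hne with hlt | hgt
            · obtain ⟨ε, hε0, hεlt⟩ := exists_rat_btwn (sub_pos.2 hlt)
              obtain ⟨q, hq, hq1, hq2⟩ := hy.2.2 ε (by exact_mod_cast hε0)
              have := hy₀.2.1 q hq hq2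
              linarith
            · obtain ⟨ε, hε0, hεlt⟩ := exists_rat_btwn (sub_pos.2 hgt)
              obtain ⟨q, hq, hq1, hq2⟩ := hy₀.2.2 ε (by exact_mod_cast hε0)
              have := hy.2.1 q hq hq2
              linarith
          have hy₀null : μ 0 {y₀} = 0 := by
            by_contra h
            exact hy₀.1 (hDa 0 y₀ h)
          exact le_antisymm ((measure_mono hsub).trans (le_of_eq hy₀null)) zero_le
      simp only [hsec]
      simp
    have hfinal : ν (S \ upApp D S) ≤ ν C1 + ν (e ⁻¹' C3) :=
      le_trans (measure_mono hincl) (measure_union_le _ _)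
    have hpre3 : ν (e ⁻¹' C3) = (μ 0).prod ν' C3 := by
      rw [← hmp, MeasurableEquiv.map_apply]
    rw [hC1null, hpre3, hC3null] at hfinal
    simpa using le_antisymm (by simpa using hfinal) zero_le

end LemmaB

section Core

lemma measurable_update_eval {δ : Type*} [DecidableEq δ] (w : δ → ℝ) (b idx : δ) :
    Measurable (fun v : ℝ => Function.update w b v idx) := by
  simp only [Function.update_apply]
  by_cases h : idx = b
  · simp only [if_pos h]; exact measurable_id
  · simp only [if_neg h]; exact measurable_const

theorem core_swap {n m : ℕ} (mμ : (Fin n ⊕ Fin n) → Measure ℝ)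
    (hp : ∀ s, IsProbabilityMeasure (mμ s))
    (hiden : ∀ i : Fin n, mμ (Sum.inr i) = mμ (Sum.inl i))
    (g : Fin m → (Fin n → ℝ) → ℝ≥0∞) (hgm : ∀ j, Measurable (g j))
    (hmono : ∀ j, Monotone (g j)) (H : Fin m → Finset (Fin n)) :
    ∫⁻ z, ∏ j, g j (fun i => z (if i ∈ H j then Sum.inr i else Sum.inl i)) ∂(Measure.pi mμ)
      ≤ ∫⁻ z, ∏ j, g j (fun i => z (Sum.inl i)) ∂(Measure.pi mμ) := by
  classical
  haveI := hp
  haveI : ∀ s, SigmaFinite (mμ s) := fun s => inferInstance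
  set F : (Fin m → Finset (Fin n)) → ((Fin n ⊕ Fin n) → ℝ) → ℝ≥0∞ := fun K z =>
    ∏ j, g j (fun i => z (if i ∈ K j then Sum.inr i else Sum.inl i)) with hFdef
  have hF : ∀ K, Measurable (F K) := by
    intro K
    apply Finset.measurable_prod
    intro j _
    exact (hgm j).comp (measurable_pi_lambda _ fun i => measurable_pi_apply _)
  suffices h : ∀ s : Finset (Fin n), ∀ H : Fin m → Finset (Fin n), (∀ j, H j ⊆ s) →
      ∫⁻ z, F H z ∂(Measure.pi mμ)
        ≤ ∫⁻ z, ∏ j, g j (fun i => z (Sum.inl i)) ∂(Measure.pi mμ) by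
    exact h Finset.univ H fun j => Finset.subset_univ _
  intro s
  induction s using Finset.induction_on with
  | empty =>
    intro H hH
    apply le_of_eq
    apply lintegral_congr
    intro z
    apply Finset.prod_congr rfl
    intro j _
    congr 1
    funext i
    rw [Finset.subset_empty.1 (hH j)]
    simp
  | @insert a s ha ihs =>
    intro H hH
    set H' : Fin m → Finset (Fin n) := fun j => (H j).erase a with hH'def
    have hH' : ∀ j, H' j ⊆ s := by
      intro j x hx
      rcases Finset.mem_erase.1 hx with ⟨hxa, hxH⟩
      rcases Finset.mem_insert.1 (hH j hxH) with h | h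
      · exact absurd h hxa
      · exact h
    refine le_trans ?_ (ihs H' hH')
    set t : Finset (Fin n ⊕ Fin n) := {Sum.inl a, Sum.inr a} with htdef
    have hinlr : (Sum.inl a : Fin n ⊕ Fin n) ∉ ({Sum.inr a} : Finset (Fin n ⊕ Fin n)) := by
      simp
    have key : ∀ x, (∫⋯∫⁻_t, F H ∂mμ) x ≤ (∫⋯∫⁻_t, F H' ∂mμ) x := by
      intro x
      set Φ : ℝ → ℝ≥0∞ := fun v =>
        ∏ j ∈ Finset.univ.filter (fun j => a ∉ H j),
          g j (fun i => (Function.update x (Sum.inl a) v)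
            (if i ∈ H j then Sum.inr i else Sum.inl i)) with hΦdef
      set Ψ : ℝ → ℝ≥0∞ := fun v =>
        ∏ j ∈ Finset.univ.filter (fun j => a ∈ H j),
          g j (fun i => (Function.update x (Sum.inr a) v)
            (if i ∈ H j then Sum.inr i else Sum.inl i)) with hΨdef
      have hΦm : Measurable Φ := by
        apply Finset.measurable_prod
        intro j _
        exact (hgm j).comp (measurable_pi_lambda _ fun i =>
          measurable_update_eval x _ _)
      have hΨm : Measurable Ψ := by
        apply Finset.measurable_prod
        intro j _
        exact (hgm j).comp (measurable_pi_lambda _ fun i =>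
          measurable_update_eval x _ _)
      have hΦmono : Monotone Φ := by
        intro v v' hvv'
        apply Finset.prod_le_prod'
        intro j _
        apply hmono j
        intro i
        simp only [Function.update_apply]
        split <;> split <;> first | exact hvv' | exact le_refl _
      have hΨmono : Monotone Ψ := by
        intro v v' hvv'
        apply Finset.prod_le_prod'
        intro j _
        apply hmono j
        intro i
        simp only [Function.update_apply]
        split <;> split <;> first | exact hvv' | exact le_refl _
      have hsplit : ∀ xa xb : ℝ,
          F H (Function.update (Function.update x (Sum.inl a) xa) (Sum.inr a) xb)
            = Ψ xb * Φ xa := by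
        intro xa xb
        simp only [hFdef]
        rw [← Finset.prod_filter_mul_prod_filter_not Finset.univ (fun j => a ∈ H j)]
        congr 1
        · apply Finset.prod_congr rfl
          intro j hj
          have haj : a ∈ H j := (Finset.mem_filter.1 hj).2
          congr 1
          funext i
          rcases eq_or_ne i a with rfl | hne
          · simp [haj, Function.update_apply]
          · by_cases hi : i ∈ H j <;>
              simp [hi, Function.update_apply, hne, Sum.inr.injEq, Sum.inl.injEq]
        · apply Finset.prod_congr rfl
          intro j hj
          have haj : a ∉ H j := (Finset.mem_filter.1 hj).2
          congr 1
          funext i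
          rcases eq_or_ne i a with rfl | hne
          · simp [haj, Function.update_apply]
          · by_cases hi : i ∈ H j <;>
              simp [hi, Function.update_apply, hne, Sum.inr.injEq, Sum.inl.injEq]
      have hsplit' : ∀ xa xb : ℝ,
          F H' (Function.update (Function.update x (Sum.inl a) xa) (Sum.inr a) xb)
            = Ψ xa * Φ xa := by
        intro xa xb
        simp only [hFdef]
        rw [← Finset.prod_filter_mul_prod_filter_not Finset.univ (fun j => a ∈ H j)]
        congr 1
        · apply Finset.prod_congr rfl
          intro j hj
          have haj : a ∈ H j := (Finset.mem_filter.1 hj).2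
          have haj' : a ∉ H' j := Finset.notMem_erase a (H j)
          congr 1
          funext i
          rcases eq_or_ne i a with rfl | hne
          · simp [haj, haj', Function.update_apply]
          · have : i ∈ H' j ↔ i ∈ H j := by
              rw [hH'def]; simp [Finset.mem_erase, hne]
            by_cases hi : i ∈ H j <;>
              simp [hi, this, Function.update_apply, hne, Sum.inr.injEq, Sum.inl.injEq]
        · apply Finset.prod_congr rfl
          intro j hj
          have haj : a ∉ H j := (Finset.mem_filter.1 hj).2
          have hHeq : H' j = H j := by rw [hH'def]; exact Finset.erase_eq_of_notMem haj
          rw [hHeq]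
          congr 1
          funext i
          rcases eq_or_ne i a with rfl | hne
          · simp [haj, Function.update_apply]
          · by_cases hi : i ∈ H j <;>
              simp [hi, Function.update_apply, hne, Sum.inr.injEq, Sum.inl.injEq]
      have hlm : ∀ K : Fin m → Finset (Fin n), (∫⋯∫⁻_t, F K ∂mμ) x
          = ∫⁻ xa, ∫⁻ xb, F K (Function.update (Function.update x (Sum.inl a) xa)
              (Sum.inr a) xb) ∂(mμ (Sum.inr a)) ∂(mμ (Sum.inl a)) := by
        intro K
        rw [htdef]
        rw [show ({Sum.inl a, Sum.inr a} : Finset (Fin n ⊕ Fin n))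
          = insert (Sum.inl a) {Sum.inr a} from rfl]
        rw [lmarginal_insert _ (hF K) hinlr x]
        apply lintegral_congr
        intro xa
        rw [lmarginal_singleton]
      rw [hlm H, hlm H']
      calc ∫⁻ xa, ∫⁻ xb, F H (Function.update (Function.update x (Sum.inl a) xa)
              (Sum.inr a) xb) ∂(mμ (Sum.inr a)) ∂(mμ (Sum.inl a))
          = ∫⁻ xa, (∫⁻ xb, Ψ xb ∂(mμ (Sum.inr a))) * Φ xa ∂(mμ (Sum.inl a)) := by
            apply lintegral_congr
            intro xa
            simp_rw [hsplit]
            rw [lintegral_mul_const _ hΨm]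
        _ = (∫⁻ xb, Ψ xb ∂(mμ (Sum.inl a))) * ∫⁻ xa, Φ xa ∂(mμ (Sum.inl a)) := by
            rw [hiden a, lintegral_const_mul _ hΦm]
        _ ≤ ∫⁻ v, Ψ v * Φ v ∂(mμ (Sum.inl a)) := by
            apply chebyshev_assoc hΨm hΦm
            intro u v
            rcases le_total u v with huv | huv
            · exact ennreal_rearrange (hΨmono huv) (hΦmono huv)
            · have := ennreal_rearrange (hΨmono huv) (hΦmono huv)
              calc Ψ u * Φ v + Ψ v * Φ u = Ψ v * Φ u + Ψ u * Φ v := by ring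
                _ ≤ Ψ v * Φ v + Ψ u * Φ u := this
                _ = Ψ u * Φ u + Ψ v * Φ v := by ring
        _ = ∫⁻ xa, ∫⁻ xb, F H' (Function.update (Function.update x (Sum.inl a) xa)
              (Sum.inr a) xb) ∂(mμ (Sum.inr a)) ∂(mμ (Sum.inl a)) := by
            apply lintegral_congr
            intro xa
            simp_rw [hsplit']
            rw [lintegral_const, measure_univ, mul_one]
    set x₀ : (Fin n ⊕ Fin n) → ℝ := fun _ => 0 with hx₀
    have hsub : t ⊆ Finset.univ := Finset.subset_univ _
    calc ∫⁻ z, F H z ∂(Measure.pi mμ)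
        = (∫⋯∫⁻_Finset.univ, F H ∂mμ) x₀ := lintegral_eq_lmarginal_univ x₀
      _ = (∫⋯∫⁻_(Finset.univ \ t), ∫⋯∫⁻_t, F H ∂mμ ∂mμ) x₀ := by
          rw [← lmarginal_union mμ (F H) (hF H) Finset.sdiff_disjoint,
            Finset.sdiff_union_of_subset hsub]
      _ ≤ (∫⋯∫⁻_(Finset.univ \ t), ∫⋯∫⁻_t, F H' ∂mμ ∂mμ) x₀ :=
          lmarginal_mono (fun x => key x) x₀
      _ = (∫⋯∫⁻_Finset.univ, F H' ∂mμ) x₀ := by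
          rw [← lmarginal_union mμ (F H') (hF H') Finset.sdiff_disjoint,
            Finset.sdiff_union_of_subset hsub]
      _ = ∫⁻ z, F H' z ∂(Measure.pi mμ) := (lintegral_eq_lmarginal_univ x₀).symm

end Core

section Main

theorem pqd_half {Ω : Type*} [MeasurableSpace Ω] (P : Measure Ω)
    [IsProbabilityMeasure P] {n m : ℕ}
    (X Y : Fin n → Ω → ℝ)
    (hXm : ∀ i, Measurable (X i)) (hYm : ∀ i, Measurable (Y i))
    (hindep : iIndepFun
      (Sum.elim X Y) P)
    (hid : ∀ i, Measure.map (Y i) P = Measure.map (X i) P)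
    (f : Fin m → (Fin n → ℝ) → ℝ) (hf : ∀ j, Monotone (f j))
    (H : Fin m → Finset (Fin n)) (c : Fin m → ℝ) :
    P {ω | ∀ j, c j ≤ f j (fun i => if i ∈ H j then Y i ω else X i ω)} ≤
      P {ω | ∀ j, c j ≤ f j (fun i => X i ω)} := by
  classical
  set mμ : (Fin n ⊕ Fin n) → Measure ℝ := fun s => P.map (Sum.elim X Y s) with hmμ
  have hmel : ∀ s, Measurable (Sum.elim X Y s) := by
    intro s
    cases s with
    | inl i => exact hXm i
    | inr i => exact hYm i
  haveI hprob : ∀ s, IsProbabilityMeasure (mμ s) := fun s =>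
    Measure.isProbabilityMeasure_map (hmel s).aemeasurable
  haveI : ∀ s, SigmaFinite (mμ s) := fun s => inferInstance
  have hiden : ∀ i : Fin n, mμ (Sum.inr i) = mμ (Sum.inl i) := by
    intro i
    simp only [hmμ, Sum.elim_inl, Sum.elim_inr]
    exact hid i
  set T : Ω → (Fin n ⊕ Fin n) → ℝ := fun ω s => Sum.elim X Y s ω with hT
  have hTm : Measurable T := measurable_pi_lambda _ hmel
  have hmapT : Measure.map T P = Measure.pi mμ := by
    symm
    apply Measure.pi_eq
    intro A hA
    rw [Measure.map_apply hTm (MeasurableSet.univ_pi hA)]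
    have hpre : T ⁻¹' Set.pi Set.univ A = ⋂ s ∈ Finset.univ, Sum.elim X Y s ⁻¹' A s := by
      ext ω
      simp [hT, Set.mem_univ_pi]
    rw [hpre, hindep.measure_inter_preimage_eq_mul Finset.univ (fun s _ => hA s)]
    exact Finset.prod_congr rfl fun s _ => (Measure.map_apply (hmel s) (hA s)).symm
  set r : Fin m → Fin n → (Fin n ⊕ Fin n) := fun j i =>
    if i ∈ H j then Sum.inr i else Sum.inl i with hr
  have hrinj : ∀ j, Function.Injective (r j) := by
    intro j i i' h
    rw [hr] at h
    by_cases hi : i ∈ H j <;> by_cases hi' : i' ∈ H j <;>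
      simp [hi, hi'] at h <;> exact h
  have hrm : ∀ j, Measurable (fun z : (Fin n ⊕ Fin n) → ℝ => z ∘ r j) :=
    fun j => measurable_pi_lambda _ fun i => measurable_pi_apply _
  haveI : ∀ i : Fin n, IsProbabilityMeasure (P.map (X i)) := fun i =>
    Measure.isProbabilityMeasure_map (hXm i).aemeasurable
  set ν : Measure (Fin n → ℝ) := Measure.pi (fun i => P.map (X i)) with hν
  have hmr : ∀ j, (fun i => mμ (r j i)) = (fun i => P.map (X i)) := by
    intro j
    funext i
    rw [hmμ, hr]
    by_cases hi : i ∈ H j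
    · simp only [if_pos hi, Sum.elim_inr]
      exact hid i
    · simp only [if_neg hi, Sum.elim_inl]
  have hselmap : ∀ j, Measure.map (fun z : (Fin n ⊕ Fin n) → ℝ => z ∘ r j)
      (Measure.pi mμ) = ν := by
    intro j
    rw [map_comp_pi mμ (r j) (hrinj j), hmr j]
  have hXselmap : Measure.map (fun z : (Fin n ⊕ Fin n) → ℝ => z ∘ Sum.inl)
      (Measure.pi mμ) = ν := by
    rw [map_comp_pi mμ Sum.inl Sum.inl_injective]
    rfl
  set D : Fin n → Set ℝ := fun i =>
    Set.range ((↑) : ℚ → ℝ) ∪ {x | P.map (X i) {x} ≠ 0} with hD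
  have hDc : ∀ i, (D i).Countable := fun i =>
    (Set.countable_range _).union (countable_atoms _)
  have hDd : ∀ i, Dense (D i) := fun i =>
    Rat.denseRange_cast.mono Set.subset_union_left
  have hDa : ∀ i x, P.map (X i) {x} ≠ 0 → x ∈ D i := fun i x h => Or.inr h
  set S : Fin m → Set (Fin n → ℝ) := fun j => {x | c j ≤ f j x} with hS
  have hSup : ∀ j, UpSet (S j) := fun j x y hxy hx => le_trans hx (hf j hxy)
  have hnull : ∀ j, ν (S j \ upApp D (S j)) = 0 := fun j =>
    upApp_null n _ (fun i => inferInstance) D hDc hDd hDa (S j) (hSup j)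
  set g : Fin m → (Fin n → ℝ) → ℝ≥0∞ :=
    fun j => (upApp D (S j)).indicator (fun _ => 1) with hg
  have hgm : ∀ j, Measurable (g j) := fun j =>
    measurable_const.indicator (upApp_measurable hDc (S j))
  have hgmono : ∀ j, Monotone (g j) := fun j => indicator_monotone_of_upSet upApp_upSet
  set A : Set ((Fin n ⊕ Fin n) → ℝ) := {z | ∀ j, z ∘ r j ∈ upApp D (S j)} with hA
  set B : Set ((Fin n ⊕ Fin n) → ℝ) := {z | ∀ j, z ∘ Sum.inl ∈ upApp D (S j)} with hB
  have hAmeas : MeasurableSet A := by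
    have h : A = ⋂ j, (fun z : (Fin n ⊕ Fin n) → ℝ => z ∘ r j) ⁻¹' upApp D (S j) := by
      ext z; simp [hA]
    rw [h]
    exact MeasurableSet.iInter fun j => (hrm j) (upApp_measurable hDc (S j))
  have hBmeas : MeasurableSet B := by
    have h : B = ⋂ j, (fun z : (Fin n ⊕ Fin n) → ℝ => z ∘ Sum.inl) ⁻¹' upApp D (S j) := by
      ext z; simp [hB]
    rw [h]
    exact MeasurableSet.iInter fun j =>
      (measurable_pi_lambda _ fun i => measurable_pi_apply _) (upApp_measurable hDc (S j))
  have hπA : Measure.pi mμ A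
      = ∫⁻ z, ∏ j, g j (fun i => z (if i ∈ H j then Sum.inr i else Sum.inl i))
          ∂(Measure.pi mμ) := by
    rw [← lintegral_indicator_one hAmeas]
    apply lintegral_congr
    intro z
    by_cases hz : ∀ j, z ∘ r j ∈ upApp D (S j)
    · rw [Set.indicator_of_mem (show z ∈ A from hz)]
      exact (Finset.prod_eq_one fun j _ => Set.indicator_of_mem (hz j) _).symm
    · rw [Set.indicator_of_notMem (show z ∉ A from hz)]
      push_neg at hz
      obtain ⟨j0, hj0⟩ := hz
      exact (Finset.prod_eq_zero (Finset.mem_univ j0)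
        (Set.indicator_of_notMem hj0 _)).symm
  have hπB : Measure.pi mμ B
      = ∫⁻ z, ∏ j, g j (fun i => z (Sum.inl i)) ∂(Measure.pi mμ) := by
    rw [← lintegral_indicator_one hBmeas]
    apply lintegral_congr
    intro z
    by_cases hz : ∀ j, z ∘ Sum.inl ∈ upApp D (S j)
    · rw [Set.indicator_of_mem (show z ∈ B from hz)]
      exact (Finset.prod_eq_one fun j _ => Set.indicator_of_mem (hz j) _).symm
    · rw [Set.indicator_of_notMem (show z ∉ B from hz)]
      push_neg at hz
      obtain ⟨j0, hj0⟩ := hz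
      exact (Finset.prod_eq_zero (Finset.mem_univ j0)
        (Set.indicator_of_notMem hj0 _)).symm
  have hZeq : ∀ (j : Fin m) (ω : Ω),
      (fun i => if i ∈ H j then Y i ω else X i ω) = (T ω) ∘ r j := by
    intro j ω
    funext i
    rw [hr]
    by_cases hi : i ∈ H j <;> simp [hi, hT]
  have hincl : {ω | ∀ j, c j ≤ f j (fun i => if i ∈ H j then Y i ω else X i ω)}
      ⊆ (T ⁻¹' A) ∪ ⋃ j, (fun ω => (T ω) ∘ r j) ⁻¹' (S j \ upApp D (S j)) := by
    intro ω hω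
    simp only [Set.mem_setOf_eq] at hω
    by_cases hall : ∀ j, (T ω) ∘ r j ∈ upApp D (S j)
    · exact Or.inl hall
    · right
      push_neg at hall
      obtain ⟨j0, hj0⟩ := hall
      refine Set.mem_iUnion.2 ⟨j0, ⟨?_, hj0⟩⟩
      show c j0 ≤ f j0 ((T ω) ∘ r j0)
      rw [← hZeq j0 ω]
      exact hω j0
  have hbad : ∀ j, P ((fun ω => (T ω) ∘ r j) ⁻¹' (S j \ upApp D (S j))) = 0 := by
    intro j
    have hmapZ : Measure.map (fun ω => (T ω) ∘ r j) P = ν := by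
      have hcomp : (fun ω => (T ω) ∘ r j)
          = (fun z : (Fin n ⊕ Fin n) → ℝ => z ∘ r j) ∘ T := rfl
      rw [hcomp, ← Measure.map_map (hrm j) hTm, hmapT, hselmap j]
    have h := outer_le_of_map ((hrm j).comp hTm) hmapZ (S j \ upApp D (S j))
    rw [hnull j] at h
    exact le_antisymm h zero_le
  calc P {ω | ∀ j, c j ≤ f j (fun i => if i ∈ H j then Y i ω else X i ω)}
      ≤ P ((T ⁻¹' A) ∪ ⋃ j, (fun ω => (T ω) ∘ r j) ⁻¹' (S j \ upApp D (S j))) :=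
        measure_mono hincl
    _ ≤ P (T ⁻¹' A) + P (⋃ j, (fun ω => (T ω) ∘ r j) ⁻¹' (S j \ upApp D (S j))) :=
        measure_union_le _ _
    _ = P (T ⁻¹' A) := by rw [measure_iUnion_null hbad, add_zero]
    _ = Measure.pi mμ A := by rw [← hmapT, Measure.map_apply hTm hAmeas]
    _ = ∫⁻ z, ∏ j, g j (fun i => z (if i ∈ H j then Sum.inr i else Sum.inl i))
          ∂(Measure.pi mμ) := hπA
    _ ≤ ∫⁻ z, ∏ j, g j (fun i => z (Sum.inl i)) ∂(Measure.pi mμ) :=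
        core_swap mμ hprob hiden g hgm hgmono H
    _ = Measure.pi mμ B := hπB.symm
    _ = P (T ⁻¹' B) := by rw [← hmapT, Measure.map_apply hTm hBmeas]
    _ ≤ P {ω | ∀ j, c j ≤ f j (fun i => X i ω)} := by
        apply measure_mono
        intro ω hω
        intro j
        exact upApp_subset (hSup j) (hω j)

end Main

/-- PQD ordering theorem: for coordinatewise increasing functions `f_1, …, f_m` on
`ℝⁿ`, `X` with independent coordinates, `Y` an independent copy of `X`, and
`Z_α` obtained from `X` by swapping in the coordinates of `Y` on `H_α`, the vector
`V = (f_α(X))_α` is more positively quadrant dependent than `U = (f_α(Z_α))_α`: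
for every `c ∈ ℝᵐ`, `P(U ≥ c) ≤ P(V ≥ c)` and `P(U ≤ c) ≤ P(V ≤ c)`. -/
theorem pqd_ordering {Ω : Type*} [MeasurableSpace Ω] (P : Measure Ω)
    [IsProbabilityMeasure P] {n m : ℕ}
    (X Y : Fin n → Ω → ℝ)
    (hXm : ∀ i, Measurable (X i)) (hYm : ∀ i, Measurable (Y i))
    (hindep : iIndepFun
      (Sum.elim X Y) P)
    (hid : ∀ i, Measure.map (Y i) P = Measure.map (X i) P)
    (f : Fin m → (Fin n → ℝ) → ℝ) (hf : ∀ j, Monotone (f j))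
    (H : Fin m → Finset (Fin n)) (c : Fin m → ℝ) :
    P {ω | ∀ j, c j ≤ f j (fun i => if i ∈ H j then Y i ω else X i ω)} ≤
        P {ω | ∀ j, c j ≤ f j (fun i => X i ω)} ∧
      P {ω | ∀ j, f j (fun i => if i ∈ H j then Y i ω else X i ω) ≤ c j} ≤
        P {ω | ∀ j, f j (fun i => X i ω) ≤ c j} := by
  constructor
  · exact pqd_half P X Y hXm hYm hindep hid f hf H c
  · set X' : Fin n → Ω → ℝ := fun i ω => -(X i ω) with hX'
    set Y' : Fin n → Ω → ℝ := fun i ω => -(Y i ω) with hY'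
    set f' : Fin m → (Fin n → ℝ) → ℝ := fun j x => -(f j (fun i => -(x i))) with hf'
    have hf'mono : ∀ j, Monotone (f' j) := by
      intro j x y hxy
      simp only [hf']
      apply neg_le_neg
      exact hf j fun i => neg_le_neg (hxy i)
    have hX'm : ∀ i, Measurable (X' i) := fun i => (hXm i).neg
    have hY'm : ∀ i, Measurable (Y' i) := fun i => (hYm i).neg
    have hindep' : iIndepFun
        (Sum.elim X' Y') P := by
      have h := hindep.comp (fun _ => fun x : ℝ => -x) (fun _ => measurable_neg)
      convert h using 1
      funext s
      cases s with
      | inl i => rfl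
      | inr i => rfl
    have hid' : ∀ i, Measure.map (Y' i) P = Measure.map (X' i) P := by
      intro i
      have h1 : Y' i = (fun x : ℝ => -x) ∘ Y i := rfl
      have h2 : X' i = (fun x : ℝ => -x) ∘ X i := rfl
      rw [h1, h2, ← Measure.map_map measurable_neg (hYm i),
        ← Measure.map_map measurable_neg (hXm i), hid i]
    have key := pqd_half P X' Y' hX'm hY'm hindep' hid' f' hf'mono H (fun j => -(c j))
    have harg : ∀ (ω : Ω) (j : Fin m),
        (fun i => -(if i ∈ H j then Y' i ω else X' i ω))
          = (fun i => if i ∈ H j then Y i ω else X i ω) := by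
      intro ω j
      funext i
      by_cases hi : i ∈ H j <;> simp [hi, hX', hY']
    have hs1 : {ω | ∀ j, (fun j => -(c j)) j
          ≤ f' j (fun i => if i ∈ H j then Y' i ω else X' i ω)}
        = {ω | ∀ j, f j (fun i => if i ∈ H j then Y i ω else X i ω) ≤ c j} := by
      ext ω
      simp only [Set.mem_setOf_eq]
      apply forall_congr'
      intro j
      rw [hf']
      show -(c j) ≤ -(f j (fun i => -(if i ∈ H j then Y' i ω else X' i ω))) ↔ _
      rw [harg ω j, neg_le_neg_iff]
    have hs2 : {ω | ∀ j, (fun j => -(c j)) j ≤ f' j (fun i => X' i ω)}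
        = {ω | ∀ j, f j (fun i => X i ω) ≤ c j} := by
      ext ω
      simp only [Set.mem_setOf_eq]
      apply forall_congr'
      intro j
      rw [hf']
      show -(c j) ≤ -(f j (fun i => -(X' i ω))) ↔ _
      have : (fun i => -(X' i ω)) = (fun i => X i ω) := by
        funext i; simp [hX']
      rw [this, neg_le_neg_iff]
    rw [hs1, hs2] at key
    exact key
end

section
/- (Connecting the frameworks, direction (a) ⇒ (b)) Suppose inequality (a) holds for all countable collections of nonnegative functions depending on coordinate subsets. Then for any nonnegative measurable f, g and any collections 𝒦, ℒ ⊆ 2^{{1,...,n}}, E[max over disjoint K ∈ 𝒦, L ∈ ℒ of f̲_K(X)g̲_L(X)] ≤ E[f(X)] · E[g(X)], where f̲_K(x) = ess inf_{y ∈ [x]_K} f(y) (essential infimum over the coordinates outside K). -/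
open MeasureTheory ENNReal

lemma essInf_eq_iSup_rat {β : Type*} [MeasurableSpace β] (ν : Measure β)
    [IsProbabilityMeasure ν] (g : β → ℝ≥0∞) :
    essInf g ν = ⨆ q : ℚ,
      if ν {z | g z < ENNReal.ofReal q} = 0 then ENNReal.ofReal q else 0 := by
  apply le_antisymm
  · refine le_of_forall_lt fun b hb => ?_
    rcases ENNReal.lt_iff_exists_rat_btwn.1 hb with ⟨q, hq0, hbq, hq⟩
    have hqof : ((Real.toNNReal q : NNReal) : ℝ≥0∞) = ENNReal.ofReal q := rfl
    have hae : ∀ᵐ z ∂ν, essInf g ν ≤ g z := ae_essInf_le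
    have h0 : ν {z | g z < ENNReal.ofReal q} = 0 := by
      rw [ae_iff] at hae
      refine measure_mono_null (fun z hz => ?_) hae
      simp only [Set.mem_setOf_eq, not_le] at *
      exact hz.trans (hqof ▸ hq)
    calc b < ENNReal.ofReal q := hqof ▸ hbq
    _ = if ν {z | g z < ENNReal.ofReal q} = 0 then ENNReal.ofReal q else 0 := by
        rw [if_pos h0]
    _ ≤ _ := le_iSup (fun q : ℚ =>
        if ν {z | g z < ENNReal.ofReal q} = 0 then ENNReal.ofReal q else 0) q
  · refine iSup_le fun q => ?_
    split_ifs with h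
    · refine le_essInf_of_ae_le _ ?_
      rw [Filter.EventuallyLE, ae_iff]
      simpa [not_le] using h
    · exact zero_le

/-- Measurability of a parametrized essential infimum. -/
lemma measurable_essInf_prod {α β : Type*} [MeasurableSpace α] [MeasurableSpace β]
    (ν : Measure β) [IsProbabilityMeasure ν] {F : α × β → ℝ≥0∞} (hF : Measurable F) :
    Measurable fun x => essInf (fun z => F (x, z)) ν := by
  simp_rw [essInf_eq_iSup_rat ν]
  refine Measurable.iSup fun q => ?_
  have hs : MeasurableSet {p : α × β | F p < ENNReal.ofReal q} :=
    measurableSet_lt hF measurable_const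
  have hm : Measurable fun x => ν (Prod.mk x ⁻¹' {p : α × β | F p < ENNReal.ofReal q}) :=
    measurable_measure_prodMk_left hs
  have : ∀ x, ν {z | F (x, z) < ENNReal.ofReal q}
      = ν (Prod.mk x ⁻¹' {p : α × β | F p < ENNReal.ofReal q}) := fun x => rfl
  simp_rw [this]
  exact Measurable.ite (hm (measurableSet_singleton 0)) measurable_const measurable_const

section Aux

variable {n : ℕ} {S : Fin n → Type*} [∀ i, MeasurableSpace (S i)]
  (P : ∀ i, Measure (S i)) [∀ i, IsProbabilityMeasure (P i)]

omit [∀ i, IsProbabilityMeasure (P i)] in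
lemma measurable_glue (K : Finset (Fin n)) :
    Measurable fun p : (∀ i, S i) × (∀ i : {i : Fin n // i ∉ K}, S i) =>
      (fun i => if h : i ∈ K then p.1 i else p.2 ⟨i, h⟩ : ∀ i, S i) := by
  refine measurable_pi_lambda _ fun i => ?_
  by_cases h : i ∈ K
  · simp only [dif_pos h]
    exact (measurable_pi_apply i).comp measurable_fst
  · simp only [dif_neg h]
    exact (measurable_pi_apply (⟨i, h⟩ : {i : Fin n // i ∉ K})).comp measurable_snd

lemma measurable_essInfK {f : (∀ i, S i) → ℝ≥0∞} (hf : Measurable f)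
    (K : Finset (Fin n)) : Measurable (essInfK P f K) := by
  have h := measurable_essInf_prod (Measure.pi fun i : {i : Fin n // i ∉ K} => P i)
    (hf.comp (measurable_glue (S := S) K))
  exact h

omit [∀ i, IsProbabilityMeasure (P i)] in
lemma depOn_essInfK (f : (∀ i, S i) → ℝ≥0∞) (K : Finset (Fin n)) :
    DepOn (essInfK P f K) K := by
  intro x y hxy
  unfold essInfK
  congr 1
  funext z
  congr 1
  funext i
  by_cases h : i ∈ K
  · simp only [dif_pos h]; exact hxy i h
  · simp only [dif_neg h]

lemma essInfK_ae_le {f : (∀ i, S i) → ℝ≥0∞} (hf : Measurable f) (K : Finset (Fin n)) :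
    ∀ᵐ x ∂(Measure.pi P), essInfK P f K x ≤ f x := by
  classical
  have hmp := measurePreserving_piEquivPiSubtypeProd P (fun i => i ∈ K)
  set e := MeasurableEquiv.piEquivPiSubtypeProd (π := S) (fun i => i ∈ K) with he
  set ν := Measure.pi fun i : {i : Fin n // i ∉ K} => P i with hν
  rw [← (hmp.symm e).map_eq, (MeasurableEquiv.measurableEmbedding e.symm).ae_map_iff]
  have hsymm : ∀ (u : ∀ i : {i : Fin n // i ∈ K}, S i)
      (v : ∀ i : {i : Fin n // i ∉ K}, S i) (i : Fin n),
      e.symm (u, v) i = if h : i ∈ K then u ⟨i, h⟩ else v ⟨i, h⟩ := fun u v i => rfl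
  have hkey : ∀ (u : ∀ i : {i : Fin n // i ∈ K}, S i)
      (v : ∀ i : {i : Fin n // i ∉ K}, S i),
      essInfK P f K (e.symm (u, v)) = essInf (fun z => f (e.symm (u, z))) ν := by
    intro u v
    unfold essInfK
    congr 1
    funext z
    congr 1
    funext i
    by_cases h : i ∈ K
    · rw [dif_pos h, hsymm, dif_pos h, hsymm, dif_pos h]
    · rw [dif_neg h, hsymm, dif_neg h]
  have hG : Measurable fun uv : (∀ i : {i : Fin n // i ∈ K}, S i) ×
      (∀ i : {i : Fin n // i ∉ K}, S i) => f (e.symm uv) := hf.comp e.symm.measurable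
  have hI : Measurable fun u : ∀ i : {i : Fin n // i ∈ K}, S i =>
      essInf (fun z => f (e.symm (u, z))) ν :=
    measurable_essInf_prod (F := fun uv => f (e.symm uv)) ν hG
  rw [ae_iff]
  have hset : {uv : (∀ i : {i : Fin n // i ∈ K}, S i) × (∀ i : {i : Fin n // i ∉ K}, S i) |
        ¬ essInfK P f K (e.symm uv) ≤ f (e.symm uv)}
      = {uv : (∀ i : {i : Fin n // i ∈ K}, S i) × (∀ i : {i : Fin n // i ∉ K}, S i) |
        f (e.symm uv) < essInf (fun z => f (e.symm (uv.1, z))) ν} := by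
    ext ⟨u, v⟩
    simp only [Set.mem_setOf_eq, not_le, hkey u v]
  rw [hset]
  have hms : MeasurableSet {uv : (∀ i : {i : Fin n // i ∈ K}, S i) ×
      (∀ i : {i : Fin n // i ∉ K}, S i) |
      f (e.symm uv) < essInf (fun z => f (e.symm (uv.1, z))) ν} :=
    measurableSet_lt hG (hI.comp measurable_fst)
  rw [Measure.measure_prod_null hms]
  refine Filter.Eventually.of_forall fun u => ?_
  have hu : ∀ᵐ v ∂ν, essInf (fun z => f (e.symm (u, z))) ν ≤ f (e.symm (u, v)) := ae_essInf_le
  rw [ae_iff] at hu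
  refine measure_mono_null (fun v hv => ?_) hu
  simp only [Set.mem_preimage, Set.mem_setOf_eq, not_le] at *
  exact hv

end Aux

/-- Functional BKR inequality (a) implies version (b): from the inequality for countable
collections of nonnegative functions depending on coordinate subsets, one obtains, for
any nonnegative measurable `f, g` and any collections `𝒦, ℒ` of subsets of `{1,…,n}`,
`E[max over disjoint K ∈ 𝒦, L ∈ ℒ of f̲_K(X) g̲_L(X)] ≤ E[f(X)] E[g(X)]`. -/
theorem bkr_a_implies_b {n : ℕ} {S : Fin n → Type*} [∀ i, MeasurableSpace (S i)]
    (P : ∀ i, Measure (S i)) [∀ i, IsProbabilityMeasure (P i)]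
    (ha : ∀ (ι κ : Type) [Countable ι] [Countable κ]
      (f : ι → (∀ i, S i) → ℝ≥0∞) (g : κ → (∀ i, S i) → ℝ≥0∞)
      (K : ι → Finset (Fin n)) (L : κ → Finset (Fin n)),
      (∀ a, Measurable (f a)) → (∀ b, Measurable (g b)) →
      (∀ a, DepOn (f a) (K a)) → (∀ b, DepOn (g b) (L b)) →
      ∫⁻ x, ⨆ (a : ι) (b : κ) (_ : Disjoint (K a) (L b)), f a x * g b x
          ∂(Measure.pi P) ≤
        (∫⁻ x, ⨆ a, f a x ∂(Measure.pi P)) * ∫⁻ x, ⨆ b, g b x ∂(Measure.pi P))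
    (f g : (∀ i, S i) → ℝ≥0∞) (hf : Measurable f) (hg : Measurable g)
    (𝒦 ℒ : Set (Finset (Fin n))) :
    ∫⁻ x, ⨆ (K ∈ 𝒦) (L ∈ ℒ) (_ : Disjoint K L),
        essInfK P f K x * essInfK P g L x ∂(Measure.pi P) ≤
      (∫⁻ x, f x ∂(Measure.pi P)) * ∫⁻ x, g x ∂(Measure.pi P) := by
  classical
  have key := ha ↥𝒦 ↥ℒ (fun a => essInfK P f ↑a) (fun b => essInfK P g ↑b)
    (fun a => (↑a : Finset (Fin n))) (fun b => (↑b : Finset (Fin n)))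
    (fun a => measurable_essInfK P hf _) (fun b => measurable_essInfK P hg _)
    (fun a => depOn_essInfK P f _) (fun b => depOn_essInfK P g _)
  have hrw : ∀ x, (⨆ (K ∈ 𝒦) (L ∈ ℒ) (_ : Disjoint K L),
      essInfK P f K x * essInfK P g L x)
      = ⨆ (a : ↥𝒦) (b : ↥ℒ) (_ : Disjoint (a : Finset (Fin n)) (b : Finset (Fin n))),
        essInfK P f ↑a x * essInfK P g ↑b x := by
    intro x
    rw [iSup_subtype']
    exact iSup_congr fun a => by rw [iSup_subtype']
  calc ∫⁻ x, ⨆ (K ∈ 𝒦) (L ∈ ℒ) (_ : Disjoint K L),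
        essInfK P f K x * essInfK P g L x ∂(Measure.pi P)
      = ∫⁻ x, ⨆ (a : ↥𝒦) (b : ↥ℒ)
          (_ : Disjoint (a : Finset (Fin n)) (b : Finset (Fin n))),
          essInfK P f ↑a x * essInfK P g ↑b x ∂(Measure.pi P) :=
        lintegral_congr hrw
    _ ≤ (∫⁻ x, ⨆ a : ↥𝒦, essInfK P f ↑a x ∂(Measure.pi P)) *
        ∫⁻ x, ⨆ b : ↥ℒ, essInfK P g ↑b x ∂(Measure.pi P) := key
    _ ≤ (∫⁻ x, f x ∂(Measure.pi P)) * ∫⁻ x, g x ∂(Measure.pi P) := by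
        refine mul_le_mul' ?_ ?_
        · refine lintegral_mono_ae ?_
          have h1 : ∀ᵐ x ∂(Measure.pi P), ∀ a : ↥𝒦, essInfK P f ↑a x ≤ f x :=
            ae_all_iff.2 fun a => essInfK_ae_le P hf ↑a
          filter_upwards [h1] with x hx using iSup_le hx
        · refine lintegral_mono_ae ?_
          have h1 : ∀ᵐ x ∂(Measure.pi P), ∀ b : ↥ℒ, essInfK P g ↑b x ≤ g x :=
            ae_all_iff.2 fun b => essInfK_ae_le P hg ↑b
          filter_upwards [h1] with x hx using iSup_le hx
end
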